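/- Let A ∈ Σ, let R = A ∩ J, and let H = {g ∈ P : g(A) = A} be the stabilizer of A in P. Then the natural homomorphism from H to GL(R), given by restricting each element of H to the H-invariant subspace R, is surjective; that is, H induces the full group GL(j, F) on R, where j = dim(A ∩ J). -/

import Mathlib

/-- `A` belongs to the collection `Σ`: an `n`-dimensional subspace of `W` on
which the polar form vanishes identically and whose set of singular vectors is
a linear subspace of codimension `1`. -/
def InSigmaSet {F W : Type*} [Field F] [AddCommGroup W] [Module F W]
    (n : ℕ) (Q : QuadraticForm F W) (A : Submodule F W) : Prop :=
  Module.finrank F A = n ∧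
    (∀ x ∈ A, ∀ y ∈ A, QuadraticMap.polar (⇑Q) x y = 0) ∧
    ∃ S : Submodule F W, (S : Set W) = {x : W | x ∈ A ∧ Q x = 0} ∧
      Module.finrank F S + 1 = Module.finrank F A

theorem exists_extendGL {F V : Type*} [Field F] [AddCommGroup V] [Module F V]
    (R₀ : Submodule F V) (φ₀ : ↥R₀ ≃ₗ[F] ↥R₀) :
    ∃ ψ : V ≃ₗ[F] V, (∀ x : V, ψ x - x ∈ R₀) ∧ (∀ x : V, ψ.symm x - x ∈ R₀) ∧
      ∀ r : ↥R₀, ψ ↑r = ↑(φ₀ r) := by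
  obtain ⟨C, hC⟩ := Submodule.exists_isCompl R₀
  set pr : V →ₗ[F] ↥R₀ := R₀.linearProjOfIsCompl C hC with hprdef
  have hprR : ∀ r : ↥R₀, pr ↑r = r := fun r =>
    Submodule.linearProjOfIsCompl_apply_left hC r
  let f : (↥R₀ →ₗ[F] ↥R₀) → (V →ₗ[F] V) := fun α =>
    LinearMap.id + R₀.subtype ∘ₗ (α - LinearMap.id) ∘ₗ pr
  have hf : ∀ α x, f α x = x + (↑(α (pr x)) - ↑(pr x)) := by
    intro α x
    simp [f]
  have hcomp : ∀ (α β : ↥R₀ →ₗ[F] ↥R₀) (x : V), f β (f α x) = x + (↑(β (α (pr x))) - ↑(pr x)) := by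
    intro α β x
    have h1 : pr (f α x) = α (pr x) := by
      rw [hf, map_add, map_sub, hprR, hprR]
      abel
    rw [hf, h1, hf]
    abel
  have h1 : (f φ₀.toLinearMap) ∘ₗ (f φ₀.symm.toLinearMap) = LinearMap.id := by
    ext x
    simp only [LinearMap.comp_apply, LinearMap.id_apply, LinearEquiv.coe_coe]
    rw [hcomp]
    simp
  have h2 : (f φ₀.symm.toLinearMap) ∘ₗ (f φ₀.toLinearMap) = LinearMap.id := by
    ext x
    simp only [LinearMap.comp_apply, LinearMap.id_apply, LinearEquiv.coe_coe]
    rw [hcomp]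
    simp
  refine ⟨LinearEquiv.ofLinear (f φ₀.toLinearMap) (f φ₀.symm.toLinearMap) h1 h2, ?_, ?_, ?_⟩
  · intro x
    have := hf φ₀.toLinearMap x
    simp only [LinearEquiv.ofLinear_apply]
    rw [this, add_sub_cancel_left]
    exact sub_mem (SetLike.coe_mem _) (SetLike.coe_mem _)
  · intro x
    have h := hf φ₀.symm.toLinearMap x
    simp only [LinearEquiv.ofLinear_symm_apply]
    rw [h, add_sub_cancel_left]
    exact sub_mem (SetLike.coe_mem _) (SetLike.coe_mem _)
  · intro r
    simp only [LinearEquiv.ofLinear_apply]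
    rw [hf, hprR]
    simp only [LinearEquiv.coe_coe]
    abel

/-- The stabilizer `H` of `A ∈ Σ` in the parabolic subgroup `P` induces the
full general linear group on `R = A ∩ J`: every linear automorphism `φ` of `R`
is the restriction to `R` of some element of `H`. -/
theorem stabilizer_induces_full_GL_on_R
    {F W : Type*} [Field F] [PerfectField F] [CharP F 2]
    [AddCommGroup W] [Module F W] [FiniteDimensional F W]
    (n : ℕ) (hW : Module.finrank F W = 2 * n)
    (Q : QuadraticForm F W)
    (hnd : ∀ x : W, (∀ y : W, QuadraticMap.polar (⇑Q) x y = 0) → x = 0)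
    (J K : Submodule F W) (hJK : IsCompl J K)
    (hJ : Module.finrank F J = n) (hK : Module.finrank F K = n)
    (hQJ : ∀ x ∈ J, Q x = 0) (hQK : ∀ x ∈ K, Q x = 0)
    (A : Submodule F W) (hA : InSigmaSet n Q A)
    (φ : ↥(A ⊓ J) ≃ₗ[F] ↥(A ⊓ J)) :
    ∃ g : W ≃ₗ[F] W, (∀ x : W, Q (g x) = Q x) ∧
      Submodule.map (g : W →ₗ[F] W) J = J ∧
      Submodule.map (g : W →ₗ[F] W) A = A ∧
      ∀ (x : W) (hx : x ∈ A ⊓ J), g x = ↑(φ ⟨x, hx⟩) := by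
  classical
  obtain ⟨hdim, hiso, -⟩ := hA
  have hRJ : (A ⊓ J) ≤ J := inf_le_right
  have hRA : (A ⊓ J) ≤ A := inf_le_left
  -- basic polar identities
  have hpol : ∀ a b : W, Q (a + b) = QuadraticMap.polar (⇑Q) a b + Q a + Q b := by
    intro a b; simp only [QuadraticMap.polar]; abel
  have hJJ : ∀ a ∈ J, ∀ b ∈ J, QuadraticMap.polar (⇑Q) a b = 0 := by
    intro a ha b hb
    simp [QuadraticMap.polar, hQJ _ ha, hQJ _ hb, hQJ _ (add_mem ha hb)]
  have hKK : ∀ a ∈ K, ∀ b ∈ K, QuadraticMap.polar (⇑Q) a b = 0 := by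
    intro a ha b hb
    simp [QuadraticMap.polar, hQK _ ha, hQK _ hb, hQK _ (add_mem ha hb)]
  -- the extension ψ of φ to J
  set R' : Submodule F ↥J := (A ⊓ J).comap J.subtype with hR'def
  set e₀ : ↥R' ≃ₗ[F] ↥(A ⊓ J) := Submodule.comapSubtypeEquivOfLe hRJ with he₀def
  obtain ⟨ψ, hψ1, hψ2, hψ3⟩ := exists_extendGL R' (e₀ ≪≫ₗ φ ≪≫ₗ e₀.symm)
  have hψ1W : ∀ x : ↥J, (↑(ψ x) : W) - ↑x ∈ (A ⊓ J) := by
    intro x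
    have h := hψ1 x
    rw [hR'def, Submodule.mem_comap] at h
    simpa using h
  have hψ2W : ∀ x : ↥J, (↑(ψ.symm x) : W) - ↑x ∈ (A ⊓ J) := by
    intro x
    have h := hψ2 x
    rw [hR'def, Submodule.mem_comap] at h
    simpa using h
  -- the dual pairing between K and J
  set Φ : ↥K →ₗ[F] Module.Dual F ↥J :=
    (QuadraticMap.polarBilin Q).domRestrict₁₂ K J with hΦdef
  have hΦapp : ∀ (y : ↥K) (x : ↥J), Φ y x = QuadraticMap.polar (⇑Q) ↑y ↑x := by
    intro y x
    rw [hΦdef, LinearMap.domRestrict₁₂_apply, QuadraticMap.polarBilin_apply_apply]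
  have hΦker : ∀ y : ↥K, Φ y = 0 → y = 0 := by
    intro y hy
    have hy' : ∀ x : ↥J, QuadraticMap.polar (⇑Q) ↑y ↑x = 0 := by
      intro x
      rw [← hΦapp y x, hy]
      rfl
    have hy0 : (y : W) = 0 := by
      apply hnd
      intro z
      have hz : z ∈ J ⊔ K := by rw [hJK.codisjoint.eq_top]; exact Submodule.mem_top
      obtain ⟨u, hu, v, hv, rfl⟩ := Submodule.mem_sup.mp hz
      rw [QuadraticMap.polar_add_right, hy' ⟨u, hu⟩, hKK ↑y y.2 v hv, add_zero]
    exact Subtype.ext hy0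
  have hΦinj : Function.Injective Φ :=
    LinearMap.ker_eq_bot.mp (LinearMap.ker_eq_bot'.mpr hΦker)
  have hrank : Module.finrank F ↥K = Module.finrank F (Module.Dual F ↥J) := by
    rw [Subspace.dual_finrank_eq, hJ, hK]
  have hΦsurj := (LinearMap.injective_iff_surjective_of_finrank_eq_finrank hrank).mp hΦinj
  set Φe : ↥K ≃ₗ[F] Module.Dual F ↥J := LinearEquiv.ofBijective Φ ⟨hΦinj, hΦsurj⟩ with hΦedef
  set ψK : ↥K ≃ₗ[F] ↥K := Φe ≪≫ₗ ψ.symm.dualMap ≪≫ₗ Φe.symm with hψKdef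
  have hΦe : ∀ y : ↥K, Φe y = Φ y := fun y => rfl
  have hψK : ∀ (y : ↥K) (x : ↥J),
      QuadraticMap.polar (⇑Q) ↑(ψK y) ↑x = QuadraticMap.polar (⇑Q) ↑y ↑(ψ.symm x) := by
    intro y x
    have h1 : Φe (ψK y) = ψ.symm.dualMap (Φe y) := by
      rw [hψKdef]
      simp only [LinearEquiv.trans_apply, LinearEquiv.apply_symm_apply]
    have h2 := congrArg (fun f => f x) h1
    simp only [LinearEquiv.dualMap_apply, hΦe] at h2
    rw [← hΦapp, ← hΦapp]
    exact h2
  have hpair : ∀ (x : ↥J) (y : ↥K),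
      QuadraticMap.polar (⇑Q) ↑(ψ x) ↑(ψK y) = QuadraticMap.polar (⇑Q) ↑x ↑y := by
    intro x y
    rw [QuadraticMap.polar_comm, hψK, LinearEquiv.symm_apply_apply, QuadraticMap.polar_comm]
  have hfixK : ∀ y : ↥K, (∀ r ∈ (A ⊓ J), QuadraticMap.polar (⇑Q) r ↑y = 0) → ψK y = y := by
    intro y hy
    apply hΦinj
    apply LinearMap.ext
    intro x
    rw [hΦapp, hΦapp, hψK]
    have hd : (↑(ψ.symm x) : W) = ↑x + (↑(ψ.symm x) - ↑x) := by abel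
    rw [hd, QuadraticMap.polar_add_right]
    have h0 : QuadraticMap.polar (⇑Q) ↑y ((↑(ψ.symm x) : W) - ↑x) = 0 := by
      rw [QuadraticMap.polar_comm]
      exact hy _ (hψ2W x)
    rw [h0, add_zero]
  -- assemble g
  set eP : (↥J × ↥K) ≃ₗ[F] W := Submodule.prodEquivOfIsCompl J K hJK with hePdef
  set g : W ≃ₗ[F] W := eP.symm ≪≫ₗ (ψ.prodCongr ψK) ≪≫ₗ eP with hgdef
  have hgapp : ∀ (x : ↥J) (y : ↥K), g (↑x + ↑y) = ↑(ψ x) + ↑(ψK y) := by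
    intro x y
    have h1 : eP.symm (↑x + ↑y) = (x, y) := by
      rw [map_add, hePdef, Submodule.prodEquivOfIsCompl_symm_apply_left,
        Submodule.prodEquivOfIsCompl_symm_apply_right]
      simp [Prod.ext_iff]
    rw [hgdef]
    simp only [LinearEquiv.trans_apply, h1, LinearEquiv.prodCongr_apply]
    rw [hePdef]
    rfl
  have hgsymm : ∀ (x : ↥J) (y : ↥K), g.symm (↑x + ↑y) = ↑(ψ.symm x) + ↑(ψK.symm y) := by
    intro x y
    rw [LinearEquiv.symm_apply_eq, hgapp]
    simp
  have hdecomp : ∀ w : W, ∃ (x : ↥J) (y : ↥K), w = ↑x + ↑y := by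
    intro w
    have hw : w ∈ J ⊔ K := by rw [hJK.codisjoint.eq_top]; exact Submodule.mem_top
    obtain ⟨u, hu, v, hv, h⟩ := Submodule.mem_sup.mp hw
    exact ⟨⟨u, hu⟩, ⟨v, hv⟩, h.symm⟩
  -- Q is preserved
  have hQg : ∀ w : W, Q (g w) = Q w := by
    intro w
    obtain ⟨x, y, rfl⟩ := hdecomp w
    rw [hgapp, hpol, hpol, hpair, hQJ _ (ψ x).2, hQJ _ x.2, hQK _ (ψK y).2, hQK _ y.2]
  -- J is preserved
  have hgJ : ∀ w ∈ J, g w ∈ J := by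
    intro w hw
    have h := hgapp ⟨w, hw⟩ 0
    simp only [ZeroMemClass.coe_zero, add_zero, map_zero] at h
    rw [h]
    exact (ψ ⟨w, hw⟩).2
  have hgsJ : ∀ w ∈ J, g.symm w ∈ J := by
    intro w hw
    have h := hgsymm ⟨w, hw⟩ 0
    simp only [ZeroMemClass.coe_zero, add_zero, map_zero] at h
    rw [h]
    exact (ψ.symm ⟨w, hw⟩).2
  have hmapJ : Submodule.map (g : W →ₗ[F] W) J = J := by
    apply le_antisymm
    · rintro z ⟨w, hw, rfl⟩
      exact hgJ w hw
    · intro z hz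
      exact ⟨g.symm z, hgsJ z hz, g.apply_symm_apply z⟩
  -- A is preserved
  have hkey : ∀ a ∈ A, ∃ (x : ↥J) (y : ↥K), a = ↑x + ↑y ∧ ψK y = y ∧ ψK.symm y = y := by
    intro a ha
    obtain ⟨x, y, hxy⟩ := hdecomp a
    have hy : ∀ r ∈ (A ⊓ J), QuadraticMap.polar (⇑Q) r ↑y = 0 := by
      intro r hr
      have h1 : QuadraticMap.polar (⇑Q) r a = 0 := hiso r (hRA hr) a ha
      have h2 : QuadraticMap.polar (⇑Q) r ↑x = 0 := hJJ r (hRJ hr) ↑x x.2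
      rw [hxy, QuadraticMap.polar_add_right, h2, zero_add] at h1
      exact h1
    have hfix := hfixK y hy
    have hfix2 : ψK.symm y = y := by
      have h := congrArg ψK.symm hfix
      rw [LinearEquiv.symm_apply_apply] at h
      exact h.symm
    exact ⟨x, y, hxy, hfix, hfix2⟩
  have hgA : ∀ a ∈ A, g a ∈ A := by
    intro a ha
    obtain ⟨x, y, hxy, hfix, -⟩ := hkey a ha
    have h : g a = a + ((↑(ψ x) : W) - ↑x) := by
      rw [hxy, hgapp, hfix]
      abel
    rw [h]
    exact add_mem ha (hRA (hψ1W x))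
  have hgsA : ∀ a ∈ A, g.symm a ∈ A := by
    intro a ha
    obtain ⟨x, y, hxy, -, hfix2⟩ := hkey a ha
    have h : g.symm a = a + ((↑(ψ.symm x) : W) - ↑x) := by
      rw [hxy, hgsymm, hfix2]
      abel
    rw [h]
    exact add_mem ha (hRA (hψ2W x))
  have hmapA : Submodule.map (g : W →ₗ[F] W) A = A := by
    apply le_antisymm
    · rintro z ⟨w, hw, rfl⟩
      exact hgA w hw
    · intro z hz
      exact ⟨g.symm z, hgsA z hz, g.apply_symm_apply z⟩
  refine ⟨g, hQg, hmapJ, hmapA, ?_⟩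
  intro x hx
  have hxJ : x ∈ J := hRJ hx
  have h0 : g x = ↑(ψ ⟨x, hxJ⟩) := by
    have h := hgapp ⟨x, hxJ⟩ 0
    simpa using h
  rw [h0]
  have hr' : (⟨x, hxJ⟩ : ↥J) ∈ R' := by
    rw [hR'def, Submodule.mem_comap]
    exact hx
  have h1 := hψ3 ⟨⟨x, hxJ⟩, hr'⟩
  have he : e₀ ⟨⟨x, hxJ⟩, hr'⟩ = ⟨x, hx⟩ := Subtype.ext rfl
  rw [show (⟨x, hxJ⟩ : ↥J) = ↑(⟨⟨x, hxJ⟩, hr'⟩ : ↥R') from rfl, h1]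
  simp only [LinearEquiv.trans_apply, he]
  rfl
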